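/- In a strongly connected balanced digraph G, the resistance r_{ij} := l†_{ii} + l†_{jj} − 2 l†_{ij} satisfies r_{ij} ≥ 0 for all vertices i, j, and the triangle inequality r_{ij} ≤ r_{ik} + r_{kj} for all vertices i, j, k. -/

import Mathlib

open Matrix Finset

/-- Out-degree of vertex `i` in the digraph with adjacency `A`. -/
def outdeg {n : ℕ} (A : Fin n → Fin n → Bool) (i : Fin n) : ℕ :=
  (Finset.univ.filter (fun j => A i j = true)).card

/-- In-degree of vertex `i`. -/
def indeg {n : ℕ} (A : Fin n → Fin n → Bool) (i : Fin n) : ℕ :=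
  (Finset.univ.filter (fun j => A j i = true)).card

/-- Laplacian matrix of a digraph: diagonal = out-degree, `-1` on edges, `0` otherwise. -/
def lap {n : ℕ} (A : Fin n → Fin n → Bool) : Matrix (Fin n) (Fin n) ℝ :=
  Matrix.of fun i j => if i = j then (outdeg A i : ℝ) else if A i j then -1 else 0

/-- Reachability by directed edges. -/
def Reach {n : ℕ} (A : Fin n → Fin n → Bool) : Fin n → Fin n → Prop :=
  Relation.ReflTransGen (fun a b => A a b = true)

def StronglyConnected {n : ℕ} (A : Fin n → Fin n → Bool) : Prop := ∀ i j, Reach A i j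

def IsBalanced {n : ℕ} (A : Fin n → Fin n → Bool) : Prop := ∀ i, indeg A i = outdeg A i

/-- In-degree of `v` in an edge set `T`. -/
def tIndeg {n : ℕ} (T : Finset (Fin n × Fin n)) (v : Fin n) : ℕ :=
  (T.filter (fun e => e.2 = v)).card

/-- Reachability using only the edges of `T`. -/
def ReachIn {n : ℕ} (T : Finset (Fin n × Fin n)) : Fin n → Fin n → Prop :=
  Relation.ReflTransGen (fun a b => (a, b) ∈ T)

/-- Spanning tree of the digraph rooted at `i` (spanning arborescence, edges directed
away from `i`): every vertex other than `i` has in-degree 1, `i` has in-degree 0, and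
every vertex is reachable from `i` (i.e. the subgraph is connected and acyclic). -/
def IsSpanningTree {n : ℕ} (A : Fin n → Fin n → Bool) (i : Fin n)
    (T : Finset (Fin n × Fin n)) : Prop :=
  (∀ e ∈ T, A e.1 e.2 = true) ∧ tIndeg T i = 0 ∧
    (∀ v, v ≠ i → tIndeg T v = 1) ∧ (∀ v, ReachIn T i v)

/-- Spanning forest with exactly two trees, rooted at `i` and `j`: two vertex-disjoint
arborescences partitioning the vertex set, with roots `i` and `j`. -/
def IsTwoForest {n : ℕ} (A : Fin n → Fin n → Bool) (i j : Fin n)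
    (T : Finset (Fin n × Fin n)) : Prop :=
  (∀ e ∈ T, A e.1 e.2 = true) ∧ tIndeg T i = 0 ∧ tIndeg T j = 0 ∧
    (∀ v, v ≠ i → v ≠ j → tIndeg T v = 1) ∧ (∀ v, ReachIn T i v ∨ ReachIn T j v)

/-- `det L[{i}ᶜ, {i}ᶜ]`: determinant of the principal submatrix deleting row/column `i`. -/
def minor1 {n : ℕ} (L : Matrix (Fin n) (Fin n) ℝ) (i : Fin n) : ℝ :=
  (L.submatrix (fun a : {x : Fin n // x ≠ i} => (a : Fin n))
    (fun a : {x : Fin n // x ≠ i} => (a : Fin n))).det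

/-- `det L[{i,j}ᶜ, {i,j}ᶜ]`: determinant of the principal submatrix deleting rows and
columns `i` and `j`. -/
def minor2 {n : ℕ} (L : Matrix (Fin n) (Fin n) ℝ) (i j : Fin n) : ℝ :=
  (L.submatrix (fun a : {x : Fin n // x ≠ i ∧ x ≠ j} => (a : Fin n))
    (fun a : {x : Fin n // x ≠ i ∧ x ≠ j} => (a : Fin n))).det

/-- `M` is the Moore–Penrose inverse of `L` (the four Penrose equations). -/
def IsMoorePenrose {n : ℕ} (L M : Matrix (Fin n) (Fin n) ℝ) : Prop :=
  L * M * L = L ∧ M * L * M = M ∧ (L * M)ᵀ = L * M ∧ (M * L)ᵀ = M * L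

/-- Resistance `r_{ij} = l†_{ii} + l†_{jj} - 2 l†_{ij}` computed from `M = L†`. -/
def resist {n : ℕ} (M : Matrix (Fin n) (Fin n) ℝ) (i j : Fin n) : ℝ :=
  M i i + M j j - 2 * M i j

/-- Directed path from `i` to `j`: a list of distinct vertices starting at `i`, ending at
`j`, consecutive ones joined by directed edges. -/
def IsPath {n : ℕ} (A : Fin n → Fin n → Bool) (i j : Fin n) (p : List (Fin n)) : Prop :=
  p.Chain' (fun a b => A a b = true) ∧ p.head? = some i ∧ p.getLast? = some j ∧ p.Nodup

/-- `s` is the edge set of a directed cycle of the digraph: the cyclically consecutive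
pairs of a nonempty duplicate-free vertex list, all being directed edges. -/
def IsCycle {n : ℕ} (A : Fin n → Fin n → Bool) (s : Finset (Fin n × Fin n)) : Prop :=
  ∃ c : List (Fin n), 2 ≤ c.length ∧ c.Nodup ∧
    (∀ p ∈ c.zip (c.rotate 1), A p.1 p.2 = true) ∧ s = (c.zip (c.rotate 1)).toFinset

/-- Vertex set of a cycle given by its edge set. -/
def cycVerts {n : ℕ} (s : Finset (Fin n × Fin n)) : Finset (Fin n) := s.image Prod.fst

/-- Directed cactus: strongly connected and every directed edge lies in exactly one
directed cycle. -/
def IsCactus {n : ℕ} (A : Fin n → Fin n → Bool) : Prop :=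
  StronglyConnected A ∧
    ∀ i j : Fin n, A i j = true → ∃! s : Finset (Fin n × Fin n), IsCycle A s ∧ (i, j) ∈ s

/-- Classical distance: length (number of edges) of a shortest directed path. -/
noncomputable def pdist {n : ℕ} (A : Fin n → Fin n → Bool) (i j : Fin n) : ℕ :=
  sInf {m : ℕ | ∃ p : List (Fin n), IsPath A i j p ∧ p.length = m + 1}

/-! ### Auxiliary lemmas -/

section Aux

variable {n : ℕ}

/-- Row form of the Laplacian acting on a vector. -/
lemma lap_mulVec_apply (A : Fin n → Fin n → Bool) (hA : ∀ i, A i i = false)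
    (w : Fin n → ℝ) (v : Fin n) :
    (lap A *ᵥ w) v = ∑ u ∈ Finset.univ.filter (fun u => A v u = true), (w v - w u) := by
  classical
  have hterm : ∀ j, lap A v j * w j
      = (if j = v then (outdeg A v : ℝ) * w v else 0)
        + (if A v j = true then -(w j) else 0) := by
    intro j
    by_cases h : v = j
    · subst h; simp [lap, hA v]
    · by_cases h2 : A v j
      · simp [lap, h, Ne.symm h, h2]
      · simp [lap, h, Ne.symm h, h2]
  have : (lap A *ᵥ w) v = ∑ j, ((if j = v then (outdeg A v : ℝ) * w v else 0)
        + (if A v j = true then -(w j) else 0)) := by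
    simp only [mulVec, dotProduct]
    exact Finset.sum_congr rfl fun j _ => hterm j
  rw [this, Finset.sum_add_distrib, Finset.sum_ite_eq' Finset.univ v, Finset.sum_sub_distrib]
  simp only [Finset.mem_univ, if_true]
  congr 1
  · rw [Finset.sum_const, outdeg, nsmul_eq_mul]
  · rw [← Finset.sum_filter]
    simp
/-- Row form of the transposed Laplacian acting on a vector (uses balancedness). -/
lemma lapT_mulVec_apply (A : Fin n → Fin n → Bool) (hA : ∀ i, A i i = false)
    (hbal : IsBalanced A) (w : Fin n → ℝ) (v : Fin n) :
    ((lap A)ᵀ *ᵥ w) v = ∑ u ∈ Finset.univ.filter (fun u => A u v = true), (w v - w u) := by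
  classical
  have hterm : ∀ j, (lap A)ᵀ v j * w j
      = (if j = v then (outdeg A v : ℝ) * w v else 0)
        + (if A j v = true then -(w j) else 0) := by
    intro j
    by_cases h : j = v
    · subst h; simp [lap, transpose_apply, hA j]
    · by_cases h2 : A j v
      · simp [lap, transpose_apply, h, Ne.symm h, h2]
      · simp [lap, transpose_apply, h, Ne.symm h, h2]
  have : ((lap A)ᵀ *ᵥ w) v = ∑ j, ((if j = v then (outdeg A v : ℝ) * w v else 0)
        + (if A j v = true then -(w j) else 0)) := by
    simp only [mulVec, dotProduct]
    exact Finset.sum_congr rfl fun j _ => hterm j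
  rw [this, Finset.sum_add_distrib, Finset.sum_ite_eq' Finset.univ v, Finset.sum_sub_distrib]
  simp only [Finset.mem_univ, if_true]
  congr 1
  · rw [Finset.sum_const, ← hbal v, indeg, nsmul_eq_mul]
  · rw [← Finset.sum_filter]
    simp

/-- Strict discrete maximum principle. -/
lemma max_of_strict {S : Fin n → Finset (Fin n)} {w : Fin n → ℝ} {j : Fin n}
    (h : ∀ v, v ≠ j → ∑ u ∈ S v, (w v - w u) < 0) : ∀ u, w u ≤ w j := by
  by_contra hcon
  push_neg at hcon
  obtain ⟨u0, hu0⟩ := hcon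
  obtain ⟨m, -, hm⟩ := Finset.exists_max_image (Finset.univ : Finset (Fin n)) w
    ⟨u0, Finset.mem_univ _⟩
  have hmj : m ≠ j := by
    intro he
    exact absurd (hu0.trans_le (hm u0 (Finset.mem_univ _))) (by rw [he]; exact lt_irrefl _)
  have h1 := h m hmj
  have h2 : (0:ℝ) ≤ ∑ u ∈ S m, (w m - w u) :=
    Finset.sum_nonneg fun u _ => by
      have := hm u (Finset.mem_univ u); linarith
  linarith

/-- Weak discrete maximum principle, with backwards propagation along reachability. -/
lemma max_of_reach {S : Fin n → Finset (Fin n)} {w : Fin n → ℝ} {k : Fin n}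
    (h : ∀ v, v ≠ k → ∑ u ∈ S v, (w v - w u) ≤ 0)
    (hreach : ∀ v, Relation.ReflTransGen (fun a b => a ∈ S b) k v) :
    ∀ u, w u ≤ w k := by
  intro u0
  obtain ⟨m, -, hm⟩ := Finset.exists_max_image (Finset.univ : Finset (Fin n)) w
    ⟨u0, Finset.mem_univ _⟩
  have key : ∀ v, Relation.ReflTransGen (fun a b => a ∈ S b) k v → (w v = w m → w m ≤ w k) := by
    intro v hv
    induction hv with
    | refl => intro he; rw [← he]
    | @tail b c hab hbc ih =>
      intro hc
      by_cases hck : c = k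
      · rw [hck] at hc; rw [← hc]
      · have hsum := h c hck
        have hnn : ∀ u ∈ S c, 0 ≤ w c - w u := fun u _ => by
          have h1 := hm u (Finset.mem_univ u); linarith
        have hz := (Finset.sum_eq_zero_iff_of_nonneg hnn).mp
          (le_antisymm hsum (Finset.sum_nonneg hnn)) b hbc
        exact ih (by linarith)
  have h1 := key m (hreach m) rfl
  exact le_trans (hm u0 (Finset.mem_univ _)) h1

/-- The kernel of the Laplacian consists of constant vectors. -/
lemma ker_lap_const (A : Fin n → Fin n → Bool) (hA : ∀ i, A i i = false)
    (hsc : StronglyConnected A) {x : Fin n → ℝ} (hx : lap A *ᵥ x = 0) :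
    ∀ u v, x u = x v := by
  classical
  have hle : ∀ k u, x u ≤ x k := by
    intro k
    refine max_of_reach (S := fun v => Finset.univ.filter (fun u => A v u = true)) ?_ ?_
    · intro v _
      rw [← lap_mulVec_apply A hA, hx]
      simp
    · intro v
      have hr : Relation.ReflTransGen (fun a b => A a b = true) v k := hsc v k
      have := Relation.reflTransGen_swap.mpr hr
      refine Relation.ReflTransGen.mono ?_ _ _ this
      intro a b hab
      simp only [Finset.mem_filter, Finset.mem_univ, true_and]
      exact hab
  exact fun u v => le_antisymm (hle v u) (hle u v)

/-- The kernel of the transposed Laplacian consists of constant vectors. -/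
lemma ker_lapT_const (A : Fin n → Fin n → Bool) (hA : ∀ i, A i i = false)
    (hsc : StronglyConnected A) (hbal : IsBalanced A) {x : Fin n → ℝ}
    (hx : (lap A)ᵀ *ᵥ x = 0) : ∀ u v, x u = x v := by
  classical
  have hle : ∀ k u, x u ≤ x k := by
    intro k
    refine max_of_reach (S := fun v => Finset.univ.filter (fun u => A u v = true)) ?_ ?_
    · intro v _
      rw [← lapT_mulVec_apply A hA hbal, hx]
      simp
    · intro v
      refine Relation.ReflTransGen.mono ?_ _ _ (hsc k v)
      intro a b hab
      simp only [Finset.mem_filter, Finset.mem_univ, true_and]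
      exact hab
  exact fun u v => le_antisymm (hle v u) (hle u v)

lemma lap_mulVec_ones (A : Fin n → Fin n → Bool) (hA : ∀ i, A i i = false) :
    lap A *ᵥ (fun _ => (1:ℝ)) = 0 := by
  funext v
  rw [lap_mulVec_apply A hA]
  simp

lemma lapT_mulVec_ones (A : Fin n → Fin n → Bool) (hA : ∀ i, A i i = false)
    (hbal : IsBalanced A) : (lap A)ᵀ *ᵥ (fun _ => (1:ℝ)) = 0 := by
  funext v
  rw [lapT_mulVec_apply A hA hbal]
  simp

end Aux

/-- in a strongly connected balanced digraph the resistance is nonnegative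
and satisfies the triangle inequality. -/
theorem stmt_7 {n : ℕ} (A : Fin n → Fin n → Bool) (hA : ∀ i, A i i = false)
    (hsc : StronglyConnected A) (hbal : IsBalanced A)
    (M : Matrix (Fin n) (Fin n) ℝ) (hM : IsMoorePenrose (lap A) M) :
    (∀ i j : Fin n, 0 ≤ resist M i j) ∧
    (∀ i j k : Fin n, resist M i j ≤ resist M i k + resist M k j) := by
  classical
  rcases n with - | m
  · exact ⟨fun i => i.elim0, fun i => i.elim0⟩
  have hn : (0:ℝ) < (m+1:ℕ) := by positivity
  obtain ⟨hP1, hP2, hP3, hP4⟩ := hM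
  set L := lap A with hL
  -- M*L acts as x ↦ x - (∑ x)/N
  have hML : ∀ (x : Fin (m+1) → ℝ) (v : Fin (m+1)),
      ((M * L) *ᵥ x) v = x v - (∑ u, x u) / (m+1:ℕ) := by
    intro x v
    have hker : L *ᵥ (x - (M * L) *ᵥ x) = 0 := by
      rw [mulVec_sub, mulVec_mulVec, ← Matrix.mul_assoc, hP1, sub_self]
    have hconst := ker_lap_const A hA hsc hker
    have hsum : ∑ v, ((M * L) *ᵥ x) v = 0 := by
      have h1 : ∑ v, ((M * L) *ᵥ x) v = (fun _ => (1:ℝ)) ⬝ᵥ ((M * L) *ᵥ x) := by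
        simp [dotProduct]
      rw [h1, Matrix.dotProduct_mulVec, ← Matrix.mulVec_transpose, hP4]
      have h2 : (M * L) *ᵥ (fun _ => (1:ℝ)) = 0 := by
        rw [← mulVec_mulVec, hL, lap_mulVec_ones A hA, Matrix.mulVec_zero]
      rw [h2]
      simp [dotProduct]
    have hsum2 : ∑ u, (x u - ((M * L) *ᵥ x) u) = ∑ u, x u := by
      rw [Finset.sum_sub_distrib, hsum, sub_zero]
    have hconst2 : ∑ u, (x u - ((M * L) *ᵥ x) u) = (m+1:ℕ) * (x v - ((M * L) *ᵥ x) v) := by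
      rw [Finset.sum_congr rfl (fun u _ => by
        have := hconst u v
        simpa [Pi.sub_apply] using this)]
      simp [Finset.card_univ, mul_comm]
      ring
    have : ((m+1:ℕ) : ℝ) * (x v - ((M * L) *ᵥ x) v) = ∑ u, x u := by
      rw [← hconst2, hsum2]
    field_simp at this ⊢
    linarith
  -- L*M acts the same way
  have hLM : ∀ (x : Fin (m+1) → ℝ) (v : Fin (m+1)),
      ((L * M) *ᵥ x) v = x v - (∑ u, x u) / (m+1:ℕ) := by
    intro x v
    have hLF : Lᵀ * (L * M) = Lᵀ := by
      rw [← hP3, ← Matrix.transpose_mul, hP1]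
    have hker : Lᵀ *ᵥ (x - (L * M) *ᵥ x) = 0 := by
      rw [mulVec_sub, mulVec_mulVec, hLF, sub_self]
    have hconst := ker_lapT_const A hA hsc hbal hker
    have hsum : ∑ v, ((L * M) *ᵥ x) v = 0 := by
      have h1 : ∑ v, ((L * M) *ᵥ x) v = (fun _ => (1:ℝ)) ⬝ᵥ ((L * M) *ᵥ x) := by
        simp [dotProduct]
      rw [h1, Matrix.dotProduct_mulVec, ← Matrix.mulVec_transpose,
        Matrix.transpose_mul, ← mulVec_mulVec, lapT_mulVec_ones A hA hbal,
        Matrix.mulVec_zero, zero_dotProduct]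
    have hsum2 : ∑ u, (x u - ((L * M) *ᵥ x) u) = ∑ u, x u := by
      rw [Finset.sum_sub_distrib, hsum, sub_zero]
    have hconst2 : ∑ u, (x u - ((L * M) *ᵥ x) u) = (m+1:ℕ) * (x v - ((L * M) *ᵥ x) v) := by
      rw [Finset.sum_congr rfl (fun u _ => by
        have := hconst u v
        simpa [Pi.sub_apply] using this)]
      simp [Finset.card_univ, mul_comm]
      ring
    have : ((m+1:ℕ) : ℝ) * (x v - ((L * M) *ᵥ x) v) = ∑ u, x u := by
      rw [← hconst2, hsum2]
    field_simp at this ⊢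
    linarith
  -- key fact 1: M i j ≤ M i i  (maximum principle on row i of M)
  have key1 : ∀ i j : Fin (m+1), M i j ≤ M i i := by
    intro i j
    set z : Fin (m+1) → ℝ := Mᵀ *ᵥ Pi.single i 1 with hz
    have hzv : ∀ v, z v = M i v := by
      intro v
      simp [hz, Matrix.mulVec_single, Matrix.transpose_apply]
    have hLz : ∀ v, (Lᵀ *ᵥ z) v = (Pi.single i 1 : Fin (m+1) → ℝ) v - 1 / (m+1:ℕ) := by
      intro v
      rw [hz, mulVec_mulVec, ← Matrix.transpose_mul, hP4, hML]
      simp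
    have hmax : ∀ u, z u ≤ z i := by
      refine max_of_strict (S := fun v => Finset.univ.filter (fun u => A u v = true)) ?_
      intro v hv
      rw [← lapT_mulVec_apply A hA hbal, hLz v, Pi.single_apply, if_neg hv]
      have : (0:ℝ) < 1 / ((m+1:ℕ):ℝ) := by positivity
      linarith
    have := hmax j
    rwa [hzv, hzv] at this
  -- key fact 2: M i j ≤ M j j  (maximum principle on column j of M)
  have key2 : ∀ i j : Fin (m+1), M i j ≤ M j j := by
    intro i j
    set w : Fin (m+1) → ℝ := M *ᵥ Pi.single j 1 with hw
    have hwv : ∀ v, w v = M v j := by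
      intro v
      simp [hw, Matrix.mulVec_single]
    have hLw : ∀ v, (L *ᵥ w) v = (Pi.single j 1 : Fin (m+1) → ℝ) v - 1 / (m+1:ℕ) := by
      intro v
      rw [hw, mulVec_mulVec, hLM]
      simp
    have hmax : ∀ u, w u ≤ w j := by
      refine max_of_strict (S := fun v => Finset.univ.filter (fun u => A v u = true)) ?_
      intro v hv
      rw [← lap_mulVec_apply A hA, hLw v, Pi.single_apply, if_neg hv]
      have : (0:ℝ) < 1 / ((m+1:ℕ):ℝ) := by positivity
      linarith
    have := hmax i
    rwa [hwv, hwv] at this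
  -- key fact 3: M k j - M i j ≤ M k k - M i k  (weak maximum principle)
  have key3 : ∀ i j k : Fin (m+1), M k j - M i j ≤ M k k - M i k := by
    intro i j k
    set y : Fin (m+1) → ℝ := Mᵀ *ᵥ (Pi.single k 1 - Pi.single i 1) with hy
    have hyv : ∀ v, y v = M k v - M i v := by
      intro v
      simp [hy, mulVec_sub, Matrix.mulVec_single, Matrix.transpose_apply]
    have hLy : ∀ v, (Lᵀ *ᵥ y) v = (Pi.single k 1 : Fin (m+1) → ℝ) v - (Pi.single i 1 : Fin (m+1) → ℝ) v := by
      intro v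
      rw [hy, mulVec_mulVec, ← Matrix.transpose_mul, hP4, hML]
      simp [Pi.sub_apply]
    have hmax : ∀ u, y u ≤ y k := by
      refine max_of_reach (S := fun v => Finset.univ.filter (fun u => A u v = true)) ?_ ?_
      · intro v hv
        rw [← lapT_mulVec_apply A hA hbal, hLy v, Pi.single_apply, if_neg hv]
        simp only [zero_sub, neg_nonpos]
        rw [Pi.single_apply]
        by_cases h : v = i <;> simp [h]
      · intro v
        refine Relation.ReflTransGen.mono ?_ _ _ (hsc k v)
        intro a b hab
        simp only [Finset.mem_filter, Finset.mem_univ, true_and]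
        exact hab
    have := hmax j
    rw [hyv, hyv] at this
    linarith
  refine ⟨fun i j => ?_, fun i j k => ?_⟩
  · have h1 := key1 i j
    have h2 := key2 i j
    simp only [resist]
    linarith
  · have h3 := key3 i j k
    simp only [resist]
    linarith
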